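/- Total parity of a Majorana dimer state: let M be a perfect matching of {1,…,2L} with parities p, and let ψ ∈ H_L be a nonzero vector satisfying (γ_j + i p_{j,k} γ_k)ψ = 0 for every pair (j,k) ∈ M with j < k. Then ψ is an eigenvector of the total parity operator P with eigenvalue (−1)^{N_c(M)} · ∏_{(j,k)∈M} p_{j,k}, where N_c(M) is the number of crossing pairs of M. -/

import Mathlib

open Complex Matrix

noncomputable section

/-- Computational basis labels for `L` qubits: bit strings `b : Fin L → Fin 2`. -/
abbrev QBasis (L : ℕ) := Fin L → Fin 2

/-- State vectors of `L` qubits (the Hilbert space `H_L = (ℂ²)^{⊗L}`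
in its computational basis coordinates). -/
abbrev QVec (L : ℕ) := QBasis L → ℂ

/-- Operators on `L` qubits, written as matrices in the computational basis. -/
abbrev QOp (L : ℕ) := Matrix (QBasis L) (QBasis L) ℂ

/-- The inner product `⟨φ, ψ⟩`, conjugate-linear in the first argument. -/
def qInner {L : ℕ} (φ ψ : QVec L) : ℂ := ∑ b, (starRingEnd ℂ) (φ b) * ψ b

/-- `+1` for bit `0`, `-1` for bit `1`. -/
def bitSign (x : Fin 2) : ℂ := if x = 0 then 1 else -1

/-- Flip the `k`-th bit of a bit string. -/
def flipBit {L : ℕ} (k : Fin L) (b : QBasis L) : QBasis L :=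
  Function.update b k (1 - b k)

/-- Pauli `X` on the (1-based) site `k`; the identity if `k` is out of range. -/
def siteX (L : ℕ) (k : ℕ) : QOp L :=
  if h : 1 ≤ k ∧ k ≤ L then
    Matrix.of fun b c => if c = flipBit ⟨k - 1, by omega⟩ b then 1 else 0
  else 1

/-- Pauli `Y` on the (1-based) site `k`; the identity if `k` is out of range. -/
def siteY (L : ℕ) (k : ℕ) : QOp L :=
  if h : 1 ≤ k ∧ k ≤ L then
    Matrix.of fun b c =>
      if c = flipBit ⟨k - 1, by omega⟩ b then -Complex.I * bitSign (b ⟨k - 1, by omega⟩)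
      else 0
  else 1

/-- Pauli `Z` on the (1-based) site `k`; the identity if `k` is out of range. -/
def siteZ (L : ℕ) (k : ℕ) : QOp L :=
  if h : 1 ≤ k ∧ k ≤ L then
    Matrix.diagonal fun b => bitSign (b ⟨k - 1, by omega⟩)
  else 1

/-- The ordered operator product `f 1 * f 2 * ⋯ * f n`. -/
def opProd (L : ℕ) (f : ℕ → QOp L) (n : ℕ) : QOp L :=
  ((List.range n).map fun i => f (i + 1)).prod

/-- The Jordan–Wigner Majorana operator `γ_m` (1-based, `1 ≤ m ≤ 2L`):
`γ_{2k-1} = Z_1 ⋯ Z_{k-1} X_k` and `γ_{2k} = Z_1 ⋯ Z_{k-1} Y_k`. -/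
def majorana (L : ℕ) (m : ℕ) : QOp L :=
  opProd L (siteZ L) ((m + 1) / 2 - 1) *
    (if m % 2 = 1 then siteX L ((m + 1) / 2) else siteY L ((m + 1) / 2))

/-- The total parity operator `P = Z_1 Z_2 ⋯ Z_L`. -/
def totalParity (L : ℕ) : QOp L := opProd L (siteZ L) L


/-- `M` is a perfect matching of `{1, …, 2L}`: a finite set of pairs `(j,k)` with
`1 ≤ j < k ≤ 2L` such that every element of `{1, …, 2L}` lies in exactly one pair. -/
def IsMatching (L : ℕ) (M : Finset (ℕ × ℕ)) : Prop :=
  (∀ pr ∈ M, pr.1 < pr.2 ∧ 1 ≤ pr.1 ∧ pr.2 ≤ 2 * L) ∧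
  (∀ m : ℕ, 1 ≤ m → m ≤ 2 * L → ∃! pr : ℕ × ℕ, pr ∈ M ∧ (pr.1 = m ∨ pr.2 = m))

/-- The joint solution space of the dimer conditions
`(γ_j + i p_{j,k} γ_k) ψ = 0` for all pairs `(j,k) ∈ M`. -/
def dimerSpace (L : ℕ) (M : Finset (ℕ × ℕ)) (p : ℕ × ℕ → ℂ) : Submodule ℂ (QVec L) :=
  ⨅ pr ∈ M, LinearMap.ker
    (majorana L pr.1 + (Complex.I * p pr) • majorana L pr.2).mulVecLin
/-- The number of crossing pairs of a matching `M`: pairs `(a,b)` and `(c,d)` of `M`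
(written with `a < b`, `c < d`) cross if `a < c < b < d` or `c < a < d < b`; each
crossing is counted once (via the ordering `a < c`). -/
def crossings (M : Finset (ℕ × ℕ)) : ℕ :=
  ((M ×ˢ M).filter fun x => x.1.1 < x.2.1 ∧ x.2.1 < x.1.2 ∧ x.1.2 < x.2.2).card

lemma bitSign_mul_self (x : Fin 2) : bitSign x * bitSign x = 1 := by
  fin_cases x <;> simp [bitSign]

lemma bitSign_one_sub (x : Fin 2) : bitSign (1 - x) = -bitSign x := by
  fin_cases x <;> simp [bitSign]

lemma flipBit_apply_self {L : ℕ} (k : Fin L) (b : QBasis L) : flipBit k b k = 1 - b k := by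
  simp [flipBit]

lemma flipBit_apply_ne {L : ℕ} {k j : Fin L} (h : j ≠ k) (b : QBasis L) :
    flipBit k b j = b j := by
  simp [flipBit, Function.update_of_ne h]

lemma flipBit_flipBit {L : ℕ} (k : Fin L) (b : QBasis L) : flipBit k (flipBit k b) = b := by
  funext j
  by_cases h : j = k
  · subst h
    rw [flipBit_apply_self, flipBit_apply_self]
    generalize b j = x
    fin_cases x <;> rfl
  · rw [flipBit_apply_ne h, flipBit_apply_ne h]


lemma flipBit_comm {L : ℕ} {k j : Fin L} (h : k ≠ j) (b : QBasis L) :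
    flipBit k (flipBit j b) = flipBit j (flipBit k b) := by
  funext i
  rcases eq_or_ne i k with rfl | hik
  · rw [flipBit_apply_self, flipBit_apply_ne h, flipBit_apply_ne h,
      flipBit_apply_self]
  · rcases eq_or_ne i j with rfl | hij
    · rw [flipBit_apply_ne hik, flipBit_apply_self, flipBit_apply_self,
        flipBit_apply_ne hik]
    · rw [flipBit_apply_ne hik, flipBit_apply_ne hij, flipBit_apply_ne hij,
        flipBit_apply_ne hik]

/-- Generic single-site operator: optionally flips bit `k`, with amplitude
depending on the incoming bit at `k`. -/
def sOp {L : ℕ} (k : Fin L) (s : Bool) (f : Fin 2 → ℂ) : QOp L :=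
  Matrix.of fun b c => if c = (if s then flipBit k b else b) then f (b k) else 0

lemma sOp_mul_same {L : ℕ} (k : Fin L) (s t : Bool) (f g : Fin 2 → ℂ) :
    sOp k s f * sOp k t g =
      sOp k (xor s t) (fun x => f x * g (if s then 1 - x else x)) := by
  ext b c
  simp only [sOp, Matrix.mul_apply, Matrix.of_apply, ite_mul, zero_mul,
    Finset.sum_ite_eq', Finset.mem_univ, if_true]
  cases s <;> cases t <;>
    simp [flipBit_flipBit, flipBit_apply_self, mul_comm]

lemma sOp_mul_ne {L : ℕ} {k j : Fin L} (h : k ≠ j) (s t : Bool) (f g : Fin 2 → ℂ) :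
    sOp k s f * sOp j t g = sOp j t g * sOp k s f := by
  ext b c
  simp only [sOp, Matrix.mul_apply, Matrix.of_apply, ite_mul, zero_mul,
    Finset.sum_ite_eq', Finset.mem_univ, if_true]
  cases s <;> cases t <;>
    simp [flipBit_apply_ne, flipBit_apply_ne h, flipBit_apply_ne h.symm, mul_comm,
      flipBit_comm h]

lemma smul_sOp {L : ℕ} (c : ℂ) (k : Fin L) (s : Bool) (f : Fin 2 → ℂ) :
    c • sOp k s f = sOp k s (fun x => c * f x) := by
  ext b d
  simp [sOp, mul_ite]

lemma sOp_one {L : ℕ} (k : Fin L) : sOp k false (fun _ => 1) = 1 := by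
  ext b c
  simp [sOp, Matrix.one_apply, eq_comm]

lemma sOp_congr {L : ℕ} (k : Fin L) (s : Bool) {f g : Fin 2 → ℂ}
    (h : ∀ x, f x = g x) : sOp k s f = sOp k s g := by
  ext b c; simp [sOp, h]

lemma siteX_eq {L k : ℕ} (h1 : 1 ≤ k) (h2 : k ≤ L) :
    siteX L k = sOp ⟨k - 1, by omega⟩ true (fun _ => 1) := by
  rw [siteX, dif_pos ⟨h1, h2⟩]; rfl

lemma siteY_eq {L k : ℕ} (h1 : 1 ≤ k) (h2 : k ≤ L) :
    siteY L k = sOp ⟨k - 1, by omega⟩ true (fun x => -Complex.I * bitSign x) := by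
  rw [siteY, dif_pos ⟨h1, h2⟩]; rfl

lemma siteZ_eq {L k : ℕ} (h1 : 1 ≤ k) (h2 : k ≤ L) :
    siteZ L k = sOp ⟨k - 1, by omega⟩ false bitSign := by
  rw [siteZ, dif_pos ⟨h1, h2⟩]
  ext b c
  simp [sOp, Matrix.diagonal_apply, eq_comm]

lemma fin2_cases (f g : Fin 2 → ℂ) (h0 : f 0 = g 0) (h1 : f 1 = g 1) : ∀ x, f x = g x := by
  intro x; fin_cases x <;> assumption

-- same-site algebra
lemma siteX_mul_siteY {L k : ℕ} (h1 : 1 ≤ k) (h2 : k ≤ L) :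
    siteX L k * siteY L k = Complex.I • siteZ L k := by
  rw [siteX_eq h1 h2, siteY_eq h1 h2, siteZ_eq h1 h2, sOp_mul_same, smul_sOp]
  exact sOp_congr _ _ (by
    intro x; fin_cases x <;> simp [bitSign] <;> ring)

lemma siteY_mul_siteX {L k : ℕ} (h1 : 1 ≤ k) (h2 : k ≤ L) :
    siteY L k * siteX L k = (-Complex.I) • siteZ L k := by
  rw [siteX_eq h1 h2, siteY_eq h1 h2, siteZ_eq h1 h2, sOp_mul_same, smul_sOp]
  exact sOp_congr _ _ (by
    intro x; fin_cases x <;> simp [bitSign] <;> ring)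

lemma siteX_sq {L k : ℕ} (h1 : 1 ≤ k) (h2 : k ≤ L) : siteX L k * siteX L k = 1 := by
  rw [siteX_eq h1 h2, sOp_mul_same]
  rw [show (xor true true) = false from rfl]
  rw [sOp_congr _ _ (g := fun _ => 1) (by intro x; simp), sOp_one]

lemma siteY_sq {L k : ℕ} (h1 : 1 ≤ k) (h2 : k ≤ L) : siteY L k * siteY L k = 1 := by
  rw [siteY_eq h1 h2, sOp_mul_same]
  rw [show (xor true true) = false from rfl]
  rw [sOp_congr _ _ (g := fun _ => 1) (by
    intro x; fin_cases x <;> simp [bitSign] <;> ring), sOp_one]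

lemma siteZ_sq {L k : ℕ} (h1 : 1 ≤ k) (h2 : k ≤ L) : siteZ L k * siteZ L k = 1 := by
  rw [siteZ_eq h1 h2, sOp_mul_same]
  rw [show (xor false false) = false from rfl]
  rw [sOp_congr _ _ (g := fun _ => 1) (by
    intro x; fin_cases x <;> simp [bitSign]), sOp_one]

lemma neg_sOp {L : ℕ} (k : Fin L) (s : Bool) (f : Fin 2 → ℂ) :
    -sOp k s f = sOp k s (fun x => -f x) := by
  ext b d
  rw [Matrix.neg_apply]; simp only [sOp, Matrix.of_apply]; split <;> split <;> simp

lemma siteZ_mul_siteX_same {L k : ℕ} (h1 : 1 ≤ k) (h2 : k ≤ L) :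
    siteZ L k * siteX L k = -(siteX L k * siteZ L k) := by
  rw [siteX_eq h1 h2, siteZ_eq h1 h2, sOp_mul_same, sOp_mul_same, neg_sOp]
  rw [show (xor false true) = (xor true false) from rfl]
  exact sOp_congr _ _ (by intro x; fin_cases x <;> simp [bitSign])

lemma siteZ_mul_siteY_same {L k : ℕ} (h1 : 1 ≤ k) (h2 : k ≤ L) :
    siteZ L k * siteY L k = -(siteY L k * siteZ L k) := by
  rw [siteY_eq h1 h2, siteZ_eq h1 h2, sOp_mul_same, sOp_mul_same, neg_sOp]
  rw [show (xor false true) = (xor true false) from rfl]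
  exact sOp_congr _ _ (by intro x; fin_cases x <;> simp [bitSign] <;> ring)

/-- Each site operator is either the identity (out of range) or an `sOp`. -/
lemma site_is_sOp {L : ℕ} (S : ℕ → QOp L)
    (hS : S = siteX L ∨ S = siteY L ∨ S = siteZ L) (k : ℕ) :
    (∃ (h : 1 ≤ k ∧ k ≤ L) (s : Bool) (f : Fin 2 → ℂ),
      S k = sOp ⟨k - 1, by omega⟩ s f) ∨ S k = 1 := by
  by_cases h : 1 ≤ k ∧ k ≤ L
  · left
    rcases hS with rfl | rfl | rfl
    · exact ⟨h, true, _, siteX_eq h.1 h.2⟩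
    · exact ⟨h, true, _, siteY_eq h.1 h.2⟩
    · exact ⟨h, false, _, siteZ_eq h.1 h.2⟩
  · right
    rcases hS with rfl | rfl | rfl
    · rw [siteX, dif_neg h]
    · rw [siteY, dif_neg h]
    · rw [siteZ, dif_neg h]

/-- Any two site operators at distinct (1-based) sites commute. -/
lemma site_comm_ne {L j k : ℕ} (hjk : j ≠ k) (S T : ℕ → QOp L)
    (hS : S = siteX L ∨ S = siteY L ∨ S = siteZ L)
    (hT : T = siteX L ∨ T = siteY L ∨ T = siteZ L) :
    S j * T k = T k * S j := by
  rcases site_is_sOp S hS j with ⟨hj, s, f, hSe⟩ | hSe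
  · rcases site_is_sOp T hT k with ⟨hk, t, g, hTe⟩ | hTe
    · have hne : (⟨j - 1, by omega⟩ : Fin L) ≠ ⟨k - 1, by omega⟩ := by
        simp only [ne_eq, Fin.mk.injEq]
        omega
      rw [hSe, hTe, sOp_mul_ne hne]
    · rw [hTe, one_mul, mul_one]
  · rw [hSe, one_mul, mul_one]

lemma opProd_succ (L : ℕ) (f : ℕ → QOp L) (n : ℕ) :
    opProd L f (n + 1) = opProd L f n * f (n + 1) := by
  rw [opProd, opProd, List.range_succ, List.map_append, List.prod_append]
  simp

lemma opProd_zero (L : ℕ) (f : ℕ → QOp L) : opProd L f 0 = 1 := rfl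

/-- A site operator at a site beyond the string commutes with the Z string. -/
lemma zstring_comm {L n a : ℕ} (ha : n < a) (T : ℕ → QOp L)
    (hT : T = siteX L ∨ T = siteY L ∨ T = siteZ L) :
    opProd L (siteZ L) n * T a = T a * opProd L (siteZ L) n := by
  induction n with
  | zero => rw [opProd_zero, one_mul, mul_one]
  | succ n ih =>
    rw [opProd_succ, mul_assoc,
      site_comm_ne (by omega : n + 1 ≠ a) (siteZ L) T (Or.inr (Or.inr rfl)) hT,
      ← mul_assoc, ih (by omega), mul_assoc]

lemma siteZ_comm (L i j : ℕ) : siteZ L i * siteZ L j = siteZ L j * siteZ L i := by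
  rcases eq_or_ne i j with rfl | h
  · rfl
  · exact site_comm_ne h _ _ (Or.inr (Or.inr rfl)) (Or.inr (Or.inr rfl))

lemma zstring_comm_siteZ (L n j : ℕ) :
    opProd L (siteZ L) n * siteZ L j = siteZ L j * opProd L (siteZ L) n := by
  induction n with
  | zero => rw [opProd_zero, one_mul, mul_one]
  | succ n ih =>
    rw [opProd_succ, mul_assoc, siteZ_comm, ← mul_assoc, ih, mul_assoc]

lemma zstring_comm_zstring (L n m : ℕ) :
    opProd L (siteZ L) n * opProd L (siteZ L) m =
      opProd L (siteZ L) m * opProd L (siteZ L) n := by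
  induction m with
  | zero => rw [opProd_zero, one_mul, mul_one]
  | succ m ih =>
    rw [opProd_succ, ← mul_assoc, ih, mul_assoc, zstring_comm_siteZ, ← mul_assoc]

/-- An X or Y inside the string anticommutes with the Z string. -/
lemma zstring_anticomm {L n a : ℕ} (ha1 : 1 ≤ a) (ha2 : a ≤ n) (hn : n ≤ L)
    (T : ℕ → QOp L) (hT : T = siteX L ∨ T = siteY L) :
    T a * opProd L (siteZ L) n = -(opProd L (siteZ L) n * T a) := by
  induction n with
  | zero => omega
  | succ n ih =>
    rcases eq_or_ne a (n + 1) with rfl | hne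
    · rw [opProd_succ, ← mul_assoc,
        ← zstring_comm (by omega) T (by tauto), mul_assoc]
      have : T (n+1) * siteZ L (n+1) = -(siteZ L (n+1) * T (n+1)) := by
        rcases hT with rfl | rfl
        · rw [siteZ_mul_siteX_same ha1 hn, neg_neg]
        · rw [siteZ_mul_siteY_same ha1 hn, neg_neg]
      rw [this, mul_neg, mul_assoc]
    · rw [opProd_succ, ← mul_assoc, ih (by omega) (by omega), neg_mul, mul_assoc,
        site_comm_ne (by omega : a ≠ n + 1) T (siteZ L) (by tauto) (Or.inr (Or.inr rfl)),
        ← mul_assoc, mul_assoc]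

lemma zstring_sq {L n : ℕ} (hn : n ≤ L) :
    opProd L (siteZ L) n * opProd L (siteZ L) n = 1 := by
  induction n with
  | zero => rw [opProd_zero, one_mul]
  | succ n ih =>
    rw [opProd_succ, mul_assoc, ← mul_assoc (siteZ L (n+1)), ← zstring_comm_siteZ,
      mul_assoc, siteZ_sq (by omega) hn, mul_one, ih (by omega)]

lemma majorana_form (L m : ℕ) :
    ∃ S, (S = siteX L ∨ S = siteY L) ∧
      majorana L m = opProd L (siteZ L) ((m + 1) / 2 - 1) * S ((m + 1) / 2) := by
  by_cases h : m % 2 = 1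
  · exact ⟨siteX L, Or.inl rfl, by rw [majorana, if_pos h]⟩
  · exact ⟨siteY L, Or.inr rfl, by rw [majorana, if_neg h]⟩

lemma majorana_sq {L m : ℕ} (h1 : 1 ≤ m) (h2 : m ≤ 2 * L) :
    majorana L m * majorana L m = 1 := by
  obtain ⟨S, hS, he⟩ := majorana_form L m
  set a := (m + 1) / 2 with ha
  have ha1 : 1 ≤ a := by omega
  have ha2 : a ≤ L := by omega
  have hSsq : S a * S a = 1 := by
    rcases hS with rfl | rfl
    · exact siteX_sq ha1 ha2
    · exact siteY_sq ha1 ha2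
  rw [he, mul_assoc, ← mul_assoc (S a), ← zstring_comm (by omega : a - 1 < a) S (by tauto),
    mul_assoc, hSsq, mul_one, zstring_sq (by omega)]

lemma majorana_odd_eq {L a : ℕ} (h1 : 1 ≤ a) :
    majorana L (2 * a - 1) = opProd L (siteZ L) (a - 1) * siteX L a := by
  have h : (2 * a - 1 + 1) / 2 = a := by omega
  rw [majorana, h, if_pos (by omega)]

lemma majorana_even_eq {L a : ℕ} (h1 : 1 ≤ a) :
    majorana L (2 * a) = opProd L (siteZ L) (a - 1) * siteY L a := by
  have h : (2 * a + 1) / 2 = a := by omega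
  rw [majorana, h, if_neg (by omega)]

lemma majorana_pair {L a : ℕ} (h1 : 1 ≤ a) (h2 : a ≤ L) :
    majorana L (2 * a - 1) * majorana L (2 * a) = Complex.I • siteZ L a := by
  rw [majorana_odd_eq h1, majorana_even_eq h1, mul_assoc, ← mul_assoc (siteX L a),
    ← zstring_comm (by omega : a - 1 < a) (siteX L) (Or.inl rfl),
    mul_assoc, ← mul_assoc, zstring_sq (by omega), one_mul, siteX_mul_siteY h1 h2]

lemma majorana_pair' {L a : ℕ} (h1 : 1 ≤ a) (h2 : a ≤ L) :
    majorana L (2 * a) * majorana L (2 * a - 1) = -(Complex.I • siteZ L a) := by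
  rw [majorana_odd_eq h1, majorana_even_eq h1, mul_assoc, ← mul_assoc (siteY L a),
    ← zstring_comm (by omega : a - 1 < a) (siteY L) (Or.inr (Or.inl rfl)),
    mul_assoc, ← mul_assoc, zstring_sq (by omega), one_mul, siteY_mul_siteX h1 h2,
    neg_smul]

lemma majorana_anticomm_lt {L m n : ℕ} (h1 : 1 ≤ m) (h2 : m ≤ 2 * L)
    (h4 : n ≤ 2 * L) (h : m < n) :
    majorana L m * majorana L n = -(majorana L n * majorana L m) := by
  set a := (m + 1) / 2 with ha
  set b := (n + 1) / 2 with hb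
  rcases eq_or_ne a b with hab | hab
  · -- same site: m = 2a-1, n = 2a
    have hm : m = 2 * a - 1 := by omega
    have hn : n = 2 * a := by omega
    rw [hm, hn, majorana_pair (by omega) (by omega), majorana_pair' (by omega) (by omega),
      neg_neg]
  · have hab' : a < b := by omega
    obtain ⟨S, hS, he1⟩ := majorana_form L m
    obtain ⟨T, hT, he2⟩ := majorana_form L n
    rw [← ha] at he1
    rw [← hb] at he2
    have ha1 : 1 ≤ a := by omega
    have hb2 : b ≤ L := by omega
    have c1 : S a * opProd L (siteZ L) (b - 1) =
        -(opProd L (siteZ L) (b - 1) * S a) :=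
      zstring_anticomm ha1 (by omega) (by omega) S (by tauto)
    have c2 : opProd L (siteZ L) (a - 1) * T b = T b * opProd L (siteZ L) (a - 1) :=
      zstring_comm (by omega) T (by tauto)
    have c3 : S a * T b = T b * S a :=
      site_comm_ne (by omega) S T (by tauto) (by tauto)
    have c4 := zstring_comm_zstring L (a - 1) (b - 1)
    rw [he1, he2]
    set Pa := opProd L (siteZ L) (a - 1)
    set Pb := opProd L (siteZ L) (b - 1)
    simp only [← mul_assoc]
    rw [mul_assoc Pa, c1, mul_neg, neg_mul]
    simp only [← mul_assoc]
    rw [c4, mul_assoc, c3]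
    simp only [← mul_assoc]
    rw [mul_assoc Pb, c2]
    simp only [← mul_assoc]

lemma majorana_anticomm {L m n : ℕ} (h1 : 1 ≤ m) (h2 : m ≤ 2 * L)
    (h3 : 1 ≤ n) (h4 : n ≤ 2 * L) (hmn : m ≠ n) :
    majorana L m * majorana L n = -(majorana L n * majorana L m) := by
  rcases lt_or_gt_of_ne hmn with h | h
  · exact majorana_anticomm_lt h1 h2 h4 h
  · rw [majorana_anticomm_lt h3 h4 h2 h, neg_neg]

/-- Product of Majorana operators along a list of indices. -/
def mlist (L : ℕ) (l : List ℕ) : QOp L := (l.map (majorana L)).prod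

lemma mlist_nil (L : ℕ) : mlist L [] = 1 := rfl

lemma mlist_cons (L : ℕ) (x : ℕ) (l : List ℕ) :
    mlist L (x :: l) = majorana L x * mlist L l := by
  simp [mlist]

lemma mlist_append (L : ℕ) (l l' : List ℕ) :
    mlist L (l ++ l') = mlist L l * mlist L l' := by
  simp [mlist]

/-- The basic dimer eigen-relation: `γ_j γ_k ψ = (i p) ψ`. -/
lemma dimer_eigen {L : ℕ} {j k : ℕ} (hj1 : 1 ≤ j) (hj2 : j ≤ 2 * L)
    {c : ℂ} (hc : c = 1 ∨ c = -1) {ψ : QVec L}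
    (h : (majorana L j + (Complex.I * c) • majorana L k) *ᵥ ψ = 0) :
    (majorana L j * majorana L k) *ᵥ ψ = (Complex.I * c) • ψ := by
  have h' : majorana L j *ᵥ (majorana L j *ᵥ ψ)
      + (Complex.I * c) • (majorana L j *ᵥ (majorana L k *ᵥ ψ)) = 0 := by
    have := congrArg (fun v => majorana L j *ᵥ v) h
    simpa [Matrix.add_mulVec, Matrix.smul_mulVec, Matrix.mulVec_add,
      Matrix.mulVec_smul] using this
  rw [Matrix.mulVec_mulVec, majorana_sq hj1 hj2, Matrix.one_mulVec] at h'
  have hcc : (Complex.I * c) * (Complex.I * c) = -1 := by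
    rcases hc with rfl | rfl <;> simp [mul_comm] <;> ring_nf <;> simp [Complex.I_sq]
  have := congrArg (fun v => (Complex.I * c) • v) h'
  simp only [smul_add, smul_smul, hcc, smul_zero] at this
  rw [← Matrix.mulVec_mulVec]
  have : (Complex.I * c) • ψ + (-1 : ℂ) • (majorana L j *ᵥ (majorana L k *ᵥ ψ)) = 0 :=
    this
  have := eq_neg_of_add_eq_zero_left this
  rw [neg_smul, neg_neg, one_smul] at this
  exact this.symm

/-- Pull `γ_k` to the front across `A`. -/
lemma mlist_pull {L : ℕ} {k : ℕ} (hk1 : 1 ≤ k) (hk2 : k ≤ 2 * L)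
    {A : List ℕ} (hA : ∀ a ∈ A, 1 ≤ a ∧ a ≤ 2 * L ∧ a ≠ k) (B : List ℕ) :
    mlist L (A ++ k :: B) = ((-1 : ℂ) ^ A.length) • mlist L (k :: (A ++ B)) := by
  induction A with
  | nil => simp
  | cons a A ih =>
    have ha := hA a (by simp)
    have hrec := ih (fun x hx => hA x (by simp [hx]))
    rw [List.cons_append, mlist_cons, hrec, Matrix.mul_smul, mlist_cons, ← mul_assoc,
      majorana_anticomm ha.1 ha.2.1 hk1 hk2 ha.2.2, neg_mul, mul_assoc,
      ← mlist_cons, List.cons_append, mlist_cons, ← mlist_cons]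
    rw [smul_neg, ← neg_smul, ← mlist_cons]
    rw [List.length_cons, pow_succ, mul_comm ((-1:ℂ)^A.length), neg_one_mul]

/-- Two pairs of a matching sharing an endpoint are equal. -/
lemma matching_unique {L : ℕ} {M : Finset (ℕ × ℕ)} (hM : IsMatching L M)
    {pr pr' : ℕ × ℕ} (h1 : pr ∈ M) (h2 : pr' ∈ M) {m : ℕ}
    (e1 : pr.1 = m ∨ pr.2 = m) (e2 : pr'.1 = m ∨ pr'.2 = m) : pr = pr' := by
  have hb := hM.1 pr h1
  have hm1 : 1 ≤ m := by omega
  have hm2 : m ≤ 2 * L := by omega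
  obtain ⟨w, -, hu⟩ := hM.2 m hm1 hm2
  rw [hu pr ⟨h1, e1⟩, hu pr' ⟨h2, e2⟩]

lemma pair_filter_card {a b : ℕ} (hab : a ≠ b) (P : ℕ → Prop) [DecidablePred P] :
    ((({a, b} : Finset ℕ)).filter P).card
      = (if P a then 1 else 0) + (if P b then 1 else 0) := by
  rw [Finset.filter_insert]
  by_cases ha : P a <;> by_cases hb : P b <;>
    simp [Finset.filter_singleton, ha, hb, hab]

lemma crossings_insert {pr0 : ℕ × ℕ} {M'' : Finset (ℕ × ℕ)} (h : pr0 ∉ M'')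
    (hmin : ∀ z ∈ M'', ¬ z.1 < pr0.1) :
    crossings (insert pr0 M'') = crossings M''
      + (M''.filter fun y => pr0.1 < y.1 ∧ y.1 < pr0.2 ∧ pr0.2 < y.2).card := by
  classical
  rw [crossings, crossings, Finset.card_filter, Finset.card_filter, Finset.card_filter,
    Finset.sum_product, Finset.sum_product, Finset.sum_insert h]
  have inner : ∀ z : ℕ × ℕ, (∑ y ∈ insert pr0 M'',
      if z.1 < y.1 ∧ y.1 < z.2 ∧ z.2 < y.2 then 1 else 0)
      = (if z.1 < pr0.1 ∧ pr0.1 < z.2 ∧ z.2 < pr0.2 then 1 else 0)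
        + ∑ y ∈ M'', if z.1 < y.1 ∧ y.1 < z.2 ∧ z.2 < y.2 then 1 else 0 := by
    intro z
    rw [Finset.sum_insert h]
  rw [inner]
  have h0 : (if pr0.1 < pr0.1 ∧ pr0.1 < pr0.2 ∧ pr0.2 < pr0.2 then 1 else 0) = 0 := by
    simp
  rw [h0, zero_add]
  have h1 : ∀ z ∈ M'', (∑ y ∈ insert pr0 M'',
      if z.1 < y.1 ∧ y.1 < z.2 ∧ z.2 < y.2 then 1 else 0)
      = ∑ y ∈ M'', if z.1 < y.1 ∧ y.1 < z.2 ∧ z.2 < y.2 then 1 else 0 := by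
    intro z hz
    rw [inner z, if_neg (by intro hcon; exact hmin z hz hcon.1), zero_add]
  rw [Finset.sum_congr rfl h1]
  simp only [Prod.mk.eta]
  omega

lemma key_induction (L : ℕ) (M : Finset (ℕ × ℕ)) (hM : IsMatching L M)
    (p : ℕ × ℕ → ℂ) (hp : ∀ pr ∈ M, p pr = 1 ∨ p pr = -1)
    (ψ : QVec L)
    (hψ : ∀ pr ∈ M, (majorana L pr.1 + (Complex.I * p pr) • majorana L pr.2) *ᵥ ψ = 0) :
    ∀ N : ℕ, ∀ M' : Finset (ℕ × ℕ), M' ⊆ M → M'.card = N → ∀ l : List ℕ,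
      l.Pairwise (· < ·) →
      l.toFinset = M'.biUnion (fun pr => ({pr.1, pr.2} : Finset ℕ)) →
      mlist L l *ᵥ ψ =
        (((-1 : ℂ)) ^ crossings M' * ∏ pr ∈ M', (Complex.I * p pr)) • ψ := by
  intro N
  induction N with
  | zero =>
    intro M' hsub hcard l hsort htf
    have hM' : M' = ∅ := Finset.card_eq_zero.mp hcard
    subst hM'
    simp only [Finset.biUnion_empty] at htf
    have : l = [] := (List.toFinset_eq_empty_iff l).mp htf
    subst this
    rw [mlist_nil, Matrix.one_mulVec,
      show crossings ∅ = 0 from by simp [crossings]]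
    simp
  | succ N ih =>
    intro M' hsub hcard l hsort htf
    have hne : M'.Nonempty := Finset.card_pos.mp (by omega)
    obtain ⟨q, hq⟩ := hne
    rcases l with _ | ⟨x, t⟩
    · exfalso
      have : q.1 ∈ ([] : List ℕ).toFinset := by
        rw [htf]; exact Finset.mem_biUnion.mpr ⟨q, hq, by simp⟩
      simp at this
    rw [List.pairwise_cons] at hsort
    obtain ⟨hx_lt, htsort⟩ := hsort
    -- endpoints of M' lie in the list
    have hends : ∀ pr ∈ M', pr.1 ∈ x :: t ∧ pr.2 ∈ x :: t := by
      intro pr hpr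
      constructor <;>
      · rw [← List.mem_toFinset, htf]
        exact Finset.mem_biUnion.mpr ⟨pr, hpr, by simp⟩
    have hxE : x ∈ M'.biUnion (fun pr => ({pr.1, pr.2} : Finset ℕ)) := by
      rw [← htf]; simp
    obtain ⟨pr0, hpr0M, hxend⟩ := Finset.mem_biUnion.mp hxE
    simp only [Finset.mem_insert, Finset.mem_singleton] at hxend
    have hbounds := hM.1 pr0 (hsub hpr0M)
    have hx1 : pr0.1 = x := by
      rcases hxend with h | h
      · exact h.symm
      · exfalso
        have h1 := (hends pr0 hpr0M).1
        rcases List.mem_cons.mp h1 with h2 | h2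
        · omega
        · have := hx_lt _ h2; omega
    subst hx1
    have hk0t : pr0.2 ∈ t := by
      have h1 := (hends pr0 hpr0M).2
      rcases List.mem_cons.mp h1 with h2 | h2
      · omega
      · exact h2
    obtain ⟨A, B, hAB⟩ := List.append_of_mem hk0t
    subst hAB
    -- structure of the sorted tail
    have htsort' : List.Pairwise (· < ·) (A ++ pr0.2 :: B) := htsort
    obtain ⟨pA, pkB, hcrossAB⟩ := List.pairwise_append.mp htsort'
    have hAk0 : ∀ a ∈ A, a < pr0.2 := fun a ha => hcrossAB a ha pr0.2 (by simp)
    have hBk0 : ∀ b ∈ B, pr0.2 < b := fun b hb => (List.pairwise_cons.mp pkB).1 b hb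
    have hABsorted : (A ++ B).Pairwise (· < ·) :=
      List.pairwise_append.mpr ⟨pA, (List.pairwise_cons.mp pkB).2,
        fun a ha b hb => lt_trans (hAk0 a ha) (hBk0 b hb)⟩
    -- ranges of list elements
    have hrange : ∀ e ∈ pr0.1 :: (A ++ pr0.2 :: B), 1 ≤ e ∧ e ≤ 2 * L := by
      intro e he
      have he' : e ∈ M'.biUnion (fun pr => ({pr.1, pr.2} : Finset ℕ)) := by
        rw [← htf]; exact List.mem_toFinset.mpr he
      obtain ⟨pr, hpr, hend⟩ := Finset.mem_biUnion.mp he'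
      have := hM.1 pr (hsub hpr)
      simp only [Finset.mem_insert, Finset.mem_singleton] at hend
      omega
    have hArange : ∀ a ∈ A, 1 ≤ a ∧ a ≤ 2 * L ∧ a ≠ pr0.2 := by
      intro a ha
      have h1 := hrange a (by simp [ha])
      exact ⟨h1.1, h1.2, by have := hAk0 a ha; omega⟩
    -- the reduced matching
    set M'' := M'.erase pr0 with hM''
    have hsub'' : M'' ⊆ M := (Finset.erase_subset _ _).trans hsub
    have hcard'' : M''.card = N := by
      rw [hM'', Finset.card_erase_of_mem hpr0M]; omega
    -- endpoints of M'' are exactly the elements of A ++ B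
    have htf'' : (A ++ B).toFinset = M''.biUnion (fun pr => ({pr.1, pr.2} : Finset ℕ)) := by
      ext e
      constructor
      · intro heAB
        have heAB' : e ∈ A ++ B := List.mem_toFinset.mp heAB
        have hel : e ∈ pr0.1 :: (A ++ pr0.2 :: B) := by
          rcases List.mem_append.mp heAB' with h | h
          · simp [h]
          · simp [h]
        have he' : e ∈ M'.biUnion (fun pr => ({pr.1, pr.2} : Finset ℕ)) := by
          rw [← htf]; exact List.mem_toFinset.mpr hel
        obtain ⟨pr, hpr, hend⟩ := Finset.mem_biUnion.mp he'
        refine Finset.mem_biUnion.mpr ⟨pr, ?_, hend⟩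
        rw [hM'', Finset.mem_erase]
        refine ⟨?_, hpr⟩
        intro hEq
        rw [hEq] at hend
        simp only [Finset.mem_insert, Finset.mem_singleton] at hend
        -- e = x or e = pr0.2, both impossible for e ∈ A ++ B
        rcases List.mem_append.mp heAB' with h | h
        · have h1 : pr0.1 < e := hx_lt e (by simp [h])
          have h2 : e < pr0.2 := hAk0 e h
          omega
        · have h1 : pr0.1 < e := hx_lt e (by simp [h])
          have h2 : pr0.2 < e := hBk0 e h
          omega
      · intro he
        obtain ⟨pr, hpr, hend⟩ := Finset.mem_biUnion.mp he
        rw [hM'', Finset.mem_erase] at hpr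
        have hprM' := hpr.2
        have hne0 : pr ≠ pr0 := hpr.1
        simp only [Finset.mem_insert, Finset.mem_singleton] at hend
        have hel : e ∈ pr0.1 :: (A ++ pr0.2 :: B) := by
          rcases hend with rfl | rfl
          · exact (hends pr hprM').1
          · exact (hends pr hprM').2
        have hex : e ≠ pr0.1 := by
          rintro rfl
          exact hne0 (matching_unique hM (hsub hprM') (hsub hpr0M)
            (by omega) (Or.inl rfl))
        have hek0 : e ≠ pr0.2 := by
          rintro rfl
          exact hne0 (matching_unique hM (hsub hprM') (hsub hpr0M)
            (by omega) (Or.inr rfl))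
        rw [List.mem_toFinset]
        rcases List.mem_cons.mp hel with h | h
        · exact absurd h hex
        · rcases List.mem_append.mp h with h | h
          · exact List.mem_append.mpr (Or.inl h)
          · rcases List.mem_cons.mp h with h | h
            · exact absurd h hek0
            · exact List.mem_append.mpr (Or.inr h)
    -- IH value
    have ihv := ih M'' hsub'' hcard'' (A ++ B) hABsorted htf''
    -- basic facts about pr0
    have hp0 := hp pr0 (hsub hpr0M)
    have hd := dimer_eigen (by omega) (by omega) hp0 (hψ pr0 (hsub hpr0M))
    -- compute the left-hand side
    have step1 : mlist L (pr0.1 :: (A ++ pr0.2 :: B)) *ᵥ ψ =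
        ((-1 : ℂ) ^ A.length) •
          ((majorana L pr0.1 * majorana L pr0.2) *ᵥ (mlist L (A ++ B) *ᵥ ψ)) := by
      rw [mlist_cons, mlist_pull (by omega) (by omega) hArange B, mlist_cons,
        mul_smul_comm, Matrix.smul_mulVec, ← mul_assoc,
        ← Matrix.mulVec_mulVec]
    rw [step1, ihv, Matrix.mulVec_smul, hd]
    -- crossings decomposition
    have hmin : ∀ z ∈ M'', ¬ z.1 < pr0.1 := by
      intro z hz
      have hz' : z ∈ M' := (Finset.erase_subset _ _) hz
      have h1 := (hends z hz').1
      rcases List.mem_cons.mp h1 with h2 | h2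
      · omega
      · have := hx_lt _ h2; omega
    have hcross : crossings M' = crossings M''
        + (M''.filter fun y => pr0.1 < y.1 ∧ y.1 < pr0.2 ∧ pr0.2 < y.2).card := by
      conv_lhs => rw [← Finset.insert_erase hpr0M]
      exact crossings_insert (Finset.notMem_erase _ _) hmin
    -- parity of A.length
    set c0 := (M''.filter fun y => pr0.1 < y.1 ∧ y.1 < pr0.2 ∧ pr0.2 < y.2).card with hc0
    have hAnodup : A.Nodup := pA.nodup
    have hdisj : ∀ y ∈ M'', ∀ y' ∈ M'', y ≠ y' →
        Disjoint (({y.1, y.2} : Finset ℕ).filter (· < pr0.2))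
          (({y'.1, y'.2} : Finset ℕ).filter (· < pr0.2)) := by
      intro y hy y' hy' hne
      rw [Finset.disjoint_left]
      intro e he1 he2
      have e1 := Finset.mem_filter.mp he1
      have e2 := Finset.mem_filter.mp he2
      simp only [Finset.mem_insert, Finset.mem_singleton] at e1 e2
      exact hne (matching_unique hM (m := e) (hsub'' hy) (hsub'' hy')
        (by omega) (by omega))
    have hAcard : A.length = ∑ y ∈ M'', (({y.1, y.2} : Finset ℕ).filter (· < pr0.2)).card := by
      have h1 : A.toFinset = ((A ++ B).toFinset).filter (· < pr0.2) := by
        ext e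
        simp only [List.mem_toFinset, Finset.mem_filter, List.mem_append]
        constructor
        · intro he; exact ⟨Or.inl he, hAk0 e he⟩
        · rintro ⟨h | h, hlt⟩
          · exact h
          · exact absurd (hBk0 e h) (by omega)
      have h2 : A.length = A.toFinset.card := (List.toFinset_card_of_nodup hAnodup).symm
      rw [h2, h1, htf'', Finset.filter_biUnion, Finset.card_biUnion hdisj]
    have hpermod : ∀ y ∈ M'',
        (({y.1, y.2} : Finset ℕ).filter (· < pr0.2)).card % 2
          = (if pr0.1 < y.1 ∧ y.1 < pr0.2 ∧ pr0.2 < y.2 then 1 else 0) % 2 := by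
      intro y hy
      have hb := hM.1 y (hsub'' hy)
      have hy1 : y.1 ∈ (A ++ B).toFinset := by
        rw [htf'']; exact Finset.mem_biUnion.mpr ⟨y, hy, by simp⟩
      have hy2 : y.2 ∈ (A ++ B).toFinset := by
        rw [htf'']; exact Finset.mem_biUnion.mpr ⟨y, hy, by simp⟩
      have hk0AB : ∀ e ∈ (A ++ B).toFinset, e ≠ pr0.2 ∧ pr0.1 < e := by
        intro e he
        rcases List.mem_append.mp (List.mem_toFinset.mp he) with h | h
        · exact ⟨by have := hAk0 e h; omega, hx_lt e (by simp [h])⟩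
        · exact ⟨by have := hBk0 e h; omega, hx_lt e (by simp [h])⟩
      have f1 := hk0AB _ hy1
      have f2 := hk0AB _ hy2
      rw [pair_filter_card (by omega)]
      beta_reduce
      split_ifs <;> omega
    have hparity : A.length % 2 = c0 % 2 := by
      rw [hAcard, hc0, Finset.card_filter, Finset.sum_nat_mod,
        Finset.sum_congr rfl hpermod, ← Finset.sum_nat_mod]
    have hpow : ((-1 : ℂ)) ^ A.length = (-1) ^ c0 := by
      rw [neg_one_pow_eq_pow_mod_two, hparity, ← neg_one_pow_eq_pow_mod_two]
    -- product decomposition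
    have hprod : ∏ pr ∈ M', (Complex.I * p pr)
        = (Complex.I * p pr0) * ∏ pr ∈ M'', (Complex.I * p pr) :=
      (Finset.mul_prod_erase M' _ hpr0M).symm
    rw [hcross, hprod, hpow, smul_smul, smul_smul]
    congr 1
    rw [pow_add]
    ring

lemma mlist_range' {L : ℕ} : ∀ n, n ≤ L →
    mlist L (List.range' 1 (2 * n)) = (Complex.I ^ n) • opProd L (siteZ L) n := by
  intro n
  induction n with
  | zero => intro _; simp [mlist, opProd_zero]
  | succ n ihn =>
    intro hn
    have e1 : 2 * (n + 1) = (2 * n + 1) + 1 := by ring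
    rw [e1, List.range'_concat, List.range'_concat, mlist_append, mlist_append,
      ihn (by omega)]
    have e2 : (1 + 1 * (2 * n) : ℕ) = 2 * (n + 1) - 1 := by omega
    have e3 : (1 + 1 * (2 * n + 1) : ℕ) = 2 * (n + 1) := by omega
    rw [e2, e3]
    have e4 : mlist L [2 * (n + 1) - 1] = majorana L (2 * (n + 1) - 1) := by
      simp [mlist]
    have e5 : mlist L [2 * (n + 1)] = majorana L (2 * (n + 1)) := by
      simp [mlist]
    rw [e4, e5, mul_assoc, majorana_pair (by omega) (by omega), smul_mul_assoc,
      mul_smul_comm, smul_smul, ← pow_succ, ← opProd_succ]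

lemma range'_toFinset_eq {L : ℕ} {M : Finset (ℕ × ℕ)} (hM : IsMatching L M) :
    (List.range' 1 (2 * L)).toFinset = M.biUnion (fun pr => ({pr.1, pr.2} : Finset ℕ)) := by
  ext m
  rw [List.mem_toFinset, List.mem_range'_1]
  constructor
  · rintro ⟨h1, h2⟩
    obtain ⟨pr, ⟨hpr, hend⟩, -⟩ := hM.2 m h1 (by omega)
    exact Finset.mem_biUnion.mpr ⟨pr, hpr, by simp; omega⟩
  · intro h
    obtain ⟨pr, hpr, hend⟩ := Finset.mem_biUnion.mp h
    have := hM.1 pr hpr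
    simp only [Finset.mem_insert, Finset.mem_singleton] at hend
    omega

lemma matching_card {L : ℕ} {M : Finset (ℕ × ℕ)} (hM : IsMatching L M) :
    M.card = L := by
  have hnd : (List.range' 1 (2 * L)).Nodup :=
    (List.pairwise_lt_range' (s := 1) (n := 2 * L) 1).nodup
  have h1 : (List.range' 1 (2 * L)).toFinset.card = 2 * L := by
    rw [List.toFinset_card_of_nodup hnd, List.length_range']
  rw [range'_toFinset_eq hM] at h1
  have hdisj : ∀ y ∈ M, ∀ y' ∈ M, y ≠ y' →
      Disjoint ({y.1, y.2} : Finset ℕ) ({y'.1, y'.2} : Finset ℕ) := by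
    intro y hy y' hy' hne
    rw [Finset.disjoint_left]
    intro e he1 he2
    simp only [Finset.mem_insert, Finset.mem_singleton] at he1 he2
    exact hne (matching_unique hM (m := e) hy hy' (by omega) (by omega))
  rw [Finset.card_biUnion hdisj] at h1
  have h2 : ∀ y ∈ M, ({y.1, y.2} : Finset ℕ).card = 2 := by
    intro y hy
    have := hM.1 y hy
    rw [Finset.card_insert_of_notMem (by simp; omega), Finset.card_singleton]
  rw [Finset.sum_congr rfl h2, Finset.sum_const, smul_eq_mul] at h1
  omega

theorem dimer_state_total_parity' (L : ℕ) (M : Finset (ℕ × ℕ)) (hM : IsMatching L M)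
    (p : ℕ × ℕ → ℂ) (hp : ∀ pr ∈ M, p pr = 1 ∨ p pr = -1)
    (ψ : QVec L) (hne : ψ ≠ 0)
    (hψ : ∀ pr ∈ M, (majorana L pr.1 + (Complex.I * p pr) • majorana L pr.2) *ᵥ ψ = 0) :
    totalParity L *ᵥ ψ = (((-1 : ℂ)) ^ crossings M * ∏ pr ∈ M, p pr) • ψ := by
  have hkey := key_induction L M hM p hp ψ hψ M.card M (le_refl M)
    rfl (List.range' 1 (2 * L))
    (List.pairwise_lt_range' (s := 1) (n := 2 * L) 1) (range'_toFinset_eq hM)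
  have hcard := matching_card hM
  rw [mlist_range' L (le_refl L), Matrix.smul_mulVec] at hkey
  have hprod : ∏ pr ∈ M, (Complex.I * p pr) = Complex.I ^ L * ∏ pr ∈ M, p pr := by
    rw [Finset.prod_mul_distrib, Finset.prod_const, hcard]
  rw [hprod] at hkey
  have hIl : (-Complex.I) ^ L * Complex.I ^ L = 1 := by
    rw [← mul_pow]
    norm_num [Complex.I_mul_I]
  have := congrArg (fun v => ((-Complex.I) ^ L) • v) hkey
  simp only [smul_smul] at this
  rw [show (-Complex.I) ^ L * Complex.I ^ L = 1 from hIl, one_smul] at this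
  rw [show totalParity L = opProd L (siteZ L) L from rfl, this]
  congr 1
  rw [show (-Complex.I) ^ L * ((-1 : ℂ) ^ crossings M * (Complex.I ^ L * ∏ pr ∈ M, p pr))
      = ((-Complex.I) ^ L * Complex.I ^ L) * ((-1 : ℂ) ^ crossings M * ∏ pr ∈ M, p pr)
    from by ring, hIl, one_mul]


/-- a nonzero joint solution of the dimer conditions of a matching `M`
with parities `p` is an eigenvector of the total parity operator with eigenvalue
`(-1)^{N_c(M)} ∏_{(j,k) ∈ M} p_{j,k}`. -/
theorem dimer_state_total_parity (L : ℕ) (M : Finset (ℕ × ℕ)) (hM : IsMatching L M)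
    (p : ℕ × ℕ → ℂ) (hp : ∀ pr ∈ M, p pr = 1 ∨ p pr = -1)
    (ψ : QVec L) (hne : ψ ≠ 0)
    (hψ : ∀ pr ∈ M, (majorana L pr.1 + (Complex.I * p pr) • majorana L pr.2) *ᵥ ψ = 0) :
    totalParity L *ᵥ ψ = (((-1 : ℂ)) ^ crossings M * ∏ pr ∈ M, p pr) • ψ :=
  dimer_state_total_parity' L M hM p hp ψ hne hψ

end
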